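/- Let R ⊆ S be a finite normalizing extension of K-algebras. If every essential extension of a locally finite left R-module is locally finite, then every finitely generated essential extension of a finite dimensional left S-module is finite dimensional over K. -/

import Mathlib

set_option synthInstance.maxHeartbeats 1000000
set_option maxHeartbeats 1000000
universe v

/-- A submodule is essential if it meets every nonzero submodule nontrivially. -/
def EssSub {A M : Type*} [Ring A] [AddCommGroup M] [Module A M]
    (N : Submodule A M) : Prop :=
  ∀ P : Submodule A M, P ⊓ N = ⊥ → P = ⊥

/-- A module is locally finite if every cyclic `A`-submodule is
finite dimensional over the base field `K`. -/
def LocFin (K A M : Type*) [Field K] [Ring A] [Algebra K A]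
    [AddCommGroup M] [Module A M] [Module K M] [IsScalarTower K A M] : Prop :=
  ∀ m : M, FiniteDimensional K ((Submodule.span A {m}).restrictScalars K)

/-- restrictScalars commutes with sup. -/
lemma aux_restrictScalars_sup {K A Q : Type*} [Semiring K] [Semiring A] [AddCommMonoid Q]
    [Module A Q] [Module K Q] [SMul K A] [IsScalarTower K A Q]
    (p q : Submodule A Q) :
    (p ⊔ q).restrictScalars K = p.restrictScalars K ⊔ q.restrictScalars K := by
  ext z
  simp only [Submodule.restrictScalars_mem, Submodule.mem_sup]

/-- In a locally finite module, the span of a finite set is finite dimensional. -/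
lemma aux_span_finset_fd {K A Q : Type*} [Field K] [Ring A] [Algebra K A]
    [AddCommGroup Q] [Module A Q] [Module K Q] [IsScalarTower K A Q]
    (h : LocFin K A Q) (G : Finset Q) :
    FiniteDimensional K ((Submodule.span A (G : Set Q)).restrictScalars K) := by
  classical
  induction G using Finset.induction with
  | empty =>
      rw [Finset.coe_empty, Submodule.span_empty, Submodule.restrictScalars_bot]
      infer_instance
  | @insert a G ha ih =>
      rw [Finset.coe_insert, Submodule.span_insert, aux_restrictScalars_sup]
      haveI := h a
      haveI := ih
      exact Submodule.finiteDimensional_sup _ _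

theorem stmt10 (K S : Type*) [Field K] [Ring S] [Algebra K S]
    (R : Subalgebra K S) {n : ℕ} (x : Fin n → S)
    (hgen : Submodule.span R (Set.range x) = (⊤ : Submodule R S))
    (hnormal : ∀ i : Fin n,
      (fun r => r * x i) '' (R : Set S) = (fun r => x i * r) '' (R : Set S))
    (hR : ∀ (M : Type v) [AddCommGroup M] [Module R M] [Module K M] [IsScalarTower K R M]
      (N : Submodule R M), EssSub N → LocFin K R N → LocFin K R M) :
    ∀ (M : Type v) [AddCommGroup M] [Module S M] [Module K M] [IsScalarTower K S M],
      Module.Finite S M →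
      ∀ V : Submodule S M, EssSub V → FiniteDimensional K (V.restrictScalars K) →
        FiniteDimensional K M := by
  intro M _ _ _ _ hfg V hV hVfd
  classical
  set VR : Submodule ↥R M := V.restrictScalars ↥R with hVRdef
  -- Zorn: a maximal R-submodule C with C ⊓ VR = ⊥
  obtain ⟨C, -, hCmax⟩ := zorn_le_nonempty₀ {C : Submodule ↥R M | C ⊓ VR = ⊥}
    (fun c hcs hchain y hy => by
      refine ⟨sSup c, ?_, fun z hz => le_sSup hz⟩
      rw [Set.mem_setOf_eq, eq_bot_iff]
      intro m hm
      rw [Submodule.mem_inf] at hm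
      obtain ⟨hm1, hm2⟩ := hm
      rw [Submodule.mem_sSup_of_directed ⟨y, hy⟩ hchain.directedOn] at hm1
      obtain ⟨p, hp, hmp⟩ := hm1
      have : m ∈ p ⊓ VR := ⟨hmp, hm2⟩
      rw [hcs hp] at this
      exact this) ⊥ (by simp)
  have hC : C ⊓ VR = ⊥ := hCmax.1
  set Q := M ⧸ C with hQdef
  set f := C.mkQ with hfdef
  -- key fact: if all x i • m ∈ C then m = 0
  have hkey : ∀ m : M, (∀ i : Fin n, x i • m ∈ C) → m = 0 := by
    -- the set of m annihilated into C by all of S is an S-submodule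
    set P : Submodule S M :=
      { carrier := {m : M | ∀ s : S, s • m ∈ C}
        add_mem' := fun {a b} ha hb s => by
          rw [smul_add]; exact C.add_mem (ha s) (hb s)
        zero_mem' := fun s => by rw [smul_zero]; exact C.zero_mem
        smul_mem' := fun s' m hm s => by
          rw [← mul_smul]; exact hm (s * s') } with hPdef
    have hPbot : P = ⊥ := by
      apply hV
      rw [eq_bot_iff]
      rintro m ⟨hm1, hm2⟩
      have hmC : m ∈ C := by simpa using hm1 (1 : S)
      have : m ∈ C ⊓ VR := ⟨hmC, hm2⟩
      rw [hC] at this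
      exact this
    intro m hm
    have hmP : m ∈ P := by
      intro s
      have hs : s ∈ Submodule.span ↥R (Set.range x) := hgen ▸ Submodule.mem_top
      induction hs using Submodule.span_induction with
      | mem s hs => obtain ⟨i, rfl⟩ := hs; exact hm i
      | zero => rw [zero_smul]; exact C.zero_mem
      | add a b _ _ ha hb => rw [add_smul]; exact C.add_mem ha hb
      | smul r a _ ha => rw [smul_assoc]; exact C.smul_mem r ha
    rw [hPbot] at hmP
    simpa using hmP
  -- N := image of VR in Q is essential
  set N : Submodule ↥R Q := VR.map f with hNdef
  have hNess : EssSub N := by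
    intro P hP
    set X : Submodule ↥R M := P.comap f with hXdef
    have hCX : C ≤ X := by
      intro c hc
      show f c ∈ P
      have : f c = 0 := by
        rw [hfdef, Submodule.mkQ_apply]
        exact (Submodule.Quotient.mk_eq_zero C).2 hc
      rw [this]; exact P.zero_mem
    have hXs : X ⊓ VR = ⊥ := by
      rw [eq_bot_iff]
      rintro m ⟨hm1, hm2⟩
      have hfm : f m ∈ P ⊓ N := ⟨hm1, Submodule.mem_map_of_mem hm2⟩
      rw [hP] at hfm
      have hfm0 : f m = 0 := by simpa using hfm
      have hmC : m ∈ C := by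
        rw [hfdef, Submodule.mkQ_apply] at hfm0
        exact (Submodule.Quotient.mk_eq_zero C).1 hfm0
      have : m ∈ C ⊓ VR := ⟨hmC, hm2⟩
      rw [hC] at this
      exact this
    have hXC : X = C := (hCmax.eq_of_le hXs hCX).symm
    have : P = Submodule.map f X := by
      rw [hXdef, Submodule.map_comap_eq_of_surjective (Submodule.mkQ_surjective C)]
    rw [this, hXC, eq_bot_iff]
    rintro q ⟨c, hc, rfl⟩
    rw [Submodule.mem_bot, hfdef, Submodule.mkQ_apply]
    exact (Submodule.Quotient.mk_eq_zero C).2 hc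
  -- N is locally finite (it is finite dimensional over K)
  have hNfd : FiniteDimensional K ↥N := by
    let g : ↥(V.restrictScalars K) →ₗ[K] ↥N :=
      { toFun := fun v => ⟨f v.1, Submodule.mem_map_of_mem v.2⟩
        map_add' := fun a b => by ext; simp
        map_smul' := fun k a => by
          ext
          show f (k • a.1) = k • f a.1
          have h1 : k • (a.1 : M) = (algebraMap K ↥R k) • a.1 :=
            (algebraMap_smul ↥R k (a.1 : M)).symm
          rw [h1, map_smul]
          rw [algebraMap_smul] }
    have hgsurj : Function.Surjective g := by
      rintro ⟨q, v, hv, rfl⟩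
      exact ⟨⟨v, hv⟩, rfl⟩
    exact Module.Finite.of_surjective g hgsurj
  have hNloc : LocFin K ↥R ↥N := fun m => inferInstance
  -- apply the hypothesis: Q is locally finite over R
  have hQloc : LocFin K ↥R Q := hR Q N hNess hNloc
  -- finitely many S-generators of M
  obtain ⟨T, hT⟩ := hfg.fg_top
  -- W: span of images of x i • t
  set G : Finset Q := (Finset.univ ×ˢ T).image (fun p : Fin n × M => f (x p.1 • p.2)) with hGdef
  set W : Submodule ↥R Q := Submodule.span ↥R (G : Set Q) with hWdef
  haveI hWfd : FiniteDimensional K (W.restrictScalars K) := aux_span_finset_fd hQloc G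
  -- closure under arbitrary S-multiplication
  have hBW : ∀ m : M, (∀ i : Fin n, f (x i • m) ∈ W) → ∀ s : S, f (s • m) ∈ W := by
    intro m hm s
    have hs : s ∈ Submodule.span ↥R (Set.range x) := hgen ▸ Submodule.mem_top
    induction hs using Submodule.span_induction with
    | mem s hs => obtain ⟨i, rfl⟩ := hs; exact hm i
    | zero => rw [zero_smul, map_zero]; exact W.zero_mem
    | add a b _ _ ha hb => rw [add_smul, map_add]; exact W.add_mem ha hb
    | smul r a _ ha => rw [smul_assoc, map_smul]; exact W.smul_mem r ha
  have hCW : ∀ m : M, ∀ i : Fin n, f (x i • m) ∈ W := by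
    intro m
    have hmT : m ∈ Submodule.span S (T : Set M) := hT ▸ Submodule.mem_top
    induction hmT using Submodule.span_induction with
    | mem t ht =>
        intro i
        apply Submodule.subset_span
        exact Finset.mem_coe.2 (Finset.mem_image.2 ⟨⟨i, t⟩, by simpa using ht, rfl⟩)
    | zero => intro i; rw [smul_zero, map_zero]; exact W.zero_mem
    | add a b _ _ ha hb => intro i; rw [smul_add, map_add]; exact W.add_mem (ha i) (hb i)
    | smul s a _ ha =>
        intro i
        rw [← mul_smul]
        exact hBW a ha (x i * s)
  -- the K-linear embedding into (Fin n → W)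
  have hxk : ∀ (k : K) (m : M) (i : Fin n), x i • (k • m) = k • (x i • m) := by
    intro k m i
    rw [← algebraMap_smul S k m, ← mul_smul, ← Algebra.commutes k (x i), mul_smul,
      algebraMap_smul]
  let Φ : M →ₗ[K] (Fin n → ↥(W.restrictScalars K)) :=
    { toFun := fun m i => ⟨f (x i • m), hCW m i⟩
      map_add' := fun a b => by
        funext i
        ext
        show f (x i • (a + b)) = f (x i • a) + f (x i • b)
        rw [smul_add, map_add]
      map_smul' := fun k m => by
        funext i
        ext
        show f (x i • (k • m)) = k • f (x i • m)
        rw [hxk k m i, ← algebraMap_smul ↥R k (x i • m), map_smul, algebraMap_smul] }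
  have hΦinj : Function.Injective Φ := by
    rw [injective_iff_map_eq_zero]
    intro m hm
    apply hkey m
    intro i
    have : Φ m i = 0 := by rw [hm]; rfl
    have h2 : f (x i • m) = 0 := congrArg Subtype.val this
    rw [hfdef, Submodule.mkQ_apply] at h2
    exact (Submodule.Quotient.mk_eq_zero C).1 h2
  exact FiniteDimensional.of_injective Φ hΦinj
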